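/- (Random matrices have logarithmic height.) There exists a constant C > 0 such that, for A drawn uniformly at random from total sign matrices {−1,1}^{N×N}, the probability that h(A) > C·log₂ N tends to 0 as N → ∞. (Combined with the chain-height bound, this gives ind_{ℤ₂}(S(A)) ≤ 2C·log₂ N with probability 1 − o(1), while srank(A) = Ω(N).) -/

import Mathlib

open Finset MeasureTheory Filter
open scoped ENNReal



/-- The intersection family `I(A)` of a sign matrix: all nonempty sets
expressible as an intersection of finitely many (at least one) of the sets
`R_i^+ = {j : A i j = 1}` and `R_i^- = {j : A i j = -1}`. -/
def interFamily {N : ℕ} (A : Fin N → Fin N → ℤ) : Set (Set (Fin N)) :=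
  {S | S.Nonempty ∧ ∃ F : Finset (Fin N × Bool), F.Nonempty ∧
    S = ⋂ p ∈ F, {j | A p.1 j = if p.2 then 1 else -1}}

/-- The height `h(A)`: the maximum length of a strictly increasing chain in
the intersection family `I(A)`. -/
noncomputable def matHeight {N : ℕ} (A : Fin N → Fin N → ℤ) : ℕ :=
  sSup {k | ∃ c : Fin k → Set (Fin N), StrictMono c ∧ ∀ t, c t ∈ interFamily A}

def Witness (N a : ℕ) (B : Fin N → Fin N → Bool) : Prop :=
  ∃ i : Fin a → Fin N, ∃ x : Fin a → Fin N, ∃ ε : Fin a → Bool,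
    Function.Injective i ∧ Function.Injective x ∧ ∀ u s, B (i u) (x s) = ε u

lemma sign_iff {N : ℕ} (B : Fin N → Fin N → Bool) (r c : Fin N) (b : Bool) :
    ((if B r c then (1:ℤ) else -1) = if b then 1 else -1) ↔ B r c = b := by
  cases h : B r c <;> cases b <;> simp_all

lemma extract {N k a : ℕ} (B : Fin N → Fin N → Bool)
    (c : Fin k → Set (Fin N)) (hc : StrictMono c)
    (hm : ∀ t, c t ∈ interFamily (fun i j => if B i j then (1:ℤ) else -1))
    (ha : 0 < a) (hk : 2*a ≤ k) : Witness N a B := by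
  have hk2 : 2 ≤ k := le_trans (by omega) hk
  -- choose the column points
  have hx : ∀ t : Fin k, ∃ j, j ∈ c t ∧ ∀ s : Fin k, s < t → j ∉ c s := by
    intro t
    rcases Nat.eq_zero_or_pos t.1 with h0 | h0
    · obtain ⟨j, hj⟩ := (hm t).1
      exact ⟨j, hj, fun s hs => absurd (Fin.lt_def.mp hs) (by omega)⟩
    · have ht' : (t:ℕ) - 1 < k := by omega
      have hlt : (⟨(t:ℕ) - 1, ht'⟩ : Fin k) < t := by
        rw [Fin.lt_def]; simp only []; omega
      obtain ⟨j, hj1, hj2⟩ := Set.exists_of_ssubset (hc hlt)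
      refine ⟨j, hj1, fun s hs hjs => hj2 ?_⟩
      have hs' : s ≤ (⟨(t:ℕ) - 1, ht'⟩ : Fin k) := by
        simp only [Fin.le_def]; have := Fin.lt_def.mp hs; omega
      exact hc.monotone hs' hjs
  choose x hx1 hx2 using hx
  have hxinj : Function.Injective x := by
    intro s t hst
    by_contra hne
    rcases lt_or_gt_of_ne (fun h : s = t => hne h) with h | h
    · exact hx2 t s h (hst ▸ hx1 s)
    · exact hx2 s t h (hst ▸ hx1 t)
  -- two maps Fin (k-1) → Fin k
  have hltC : ∀ u : Fin (k-1), u.1 < k := fun u => by omega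
  have hltS : ∀ u : Fin (k-1), u.1 + 1 < k := fun u => by omega
  set uC : Fin (k-1) → Fin k := fun u => ⟨u.1, hltC u⟩ with huC
  set uS : Fin (k-1) → Fin k := fun u => ⟨u.1 + 1, hltS u⟩ with huS
  -- choose the rows
  have hrow : ∀ u : Fin (k-1), ∃ q : Fin N × Bool,
      B q.1 (x (uS u)) = !q.2 ∧ ∀ y ∈ c (uC u), B q.1 y = q.2 := by
    intro u
    obtain ⟨-, F, hF, hFeq⟩ := hm (uC u)
    have hnotin : x (uS u) ∉ c (uC u) :=
      hx2 (uS u) (uC u) (by simp only [Fin.lt_def, uS, uC]; omega)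
    rw [hFeq] at hnotin
    simp only [Set.mem_iInter, not_forall] at hnotin
    obtain ⟨p, hpF, hp⟩ := hnotin
    simp only [Set.mem_setOf_eq] at hp
    refine ⟨p, ?_, ?_⟩
    · have hne : ¬ B p.1 (x (uS u)) = p.2 := by
        intro hbe; exact hp ((sign_iff B p.1 (x (uS u)) p.2).mpr hbe)
      cases hB : B p.1 (x (uS u)) <;> cases hp2 : p.2 <;> simp_all
    · intro y hy
      rw [hFeq] at hy
      have h1 := Set.mem_iInter.mp hy p
      have h2 := Set.mem_iInter.mp h1 hpF
      exact (sign_iff B p.1 y p.2).mp h2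
  choose q hq1 hq2 using hrow
  set I : Fin (k-1) → Fin N := fun u => (q u).1 with hI
  set ε : Fin (k-1) → Bool := fun u => (q u).2 with hε
  have P1 : ∀ u : Fin (k-1), ∀ s : Fin k, s ≤ uC u → B (I u) (x s) = ε u := by
    intro u s hs
    exact hq2 u (x s) (hc.monotone hs (hx1 s))
  have P2 : ∀ u : Fin (k-1), B (I u) (x (uS u)) = !ε u := hq1
  have hIinj : Function.Injective I := by
    have key : ∀ v v' : Fin (k-1), v < v' → I v = I v' → False := by
      intro v v' hvv' hIe
      have hvv : v.1 < v'.1 := Fin.lt_def.mp hvv'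
      have e1 : B (I v) (x (uC v)) = ε v := P1 v (uC v) le_rfl
      have e2 : B (I v') (x (uC v)) = ε v' := P1 v' (uC v) (by simp only [Fin.le_def, uS, uC]; omega)
      have e3 : B (I v') (x (uS v)) = ε v' := P1 v' (uS v) (by simp only [Fin.le_def, uS, uC]; omega)
      have e4 : B (I v) (x (uS v)) = !ε v := P2 v
      rw [hIe] at e1 e4
      rw [e2] at e1
      rw [e3] at e4
      rw [e1] at e4
      simp at e4
    intro u u' he
    by_contra hne
    rcases lt_or_gt_of_ne (fun h : u = u' => hne h) with h | h
    · exact key u u' h he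
    · exact key u' u h he.symm
  -- restrict to the grid
  have hemb : ∀ t : Fin a, a - 1 + t.1 < k - 1 := by intro t; have := t.2; omega
  have hembk : ∀ s : Fin a, s.1 < k := by intro s; have := s.2; omega
  refine ⟨fun t => I ⟨a - 1 + t.1, hemb t⟩, fun s => x ⟨s.1, hembk s⟩,
    fun t => ε ⟨a - 1 + t.1, hemb t⟩, ?_, ?_, ?_⟩
  · intro t t' h
    have h2 := hIinj h
    have h3 : a - 1 + t.1 = a - 1 + t'.1 := congrArg Fin.val h2
    exact Fin.ext (by omega)
  · intro s s' h
    have h3 := congrArg Fin.val (hxinj h)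
    exact Fin.ext (by simpa using h3)
  · intro t s
    exact P1 _ _ (by simp only [Fin.le_def, uS, uC]; have := s.2; have := t.2; omega)

lemma card_pat {N a : ℕ} (i x : Fin a → Fin N) (ε : Fin a → Bool)
    (hi : Function.Injective i) (hx : Function.Injective x) :
    Nat.card {B : Fin N → Fin N → Bool // ∀ u s, B (i u) (x s) = ε u}
      ≤ 2 ^ (N*N - a*a) := by
  classical
  set P : Finset (Fin N × Fin N) :=
    Finset.image (fun q : Fin a × Fin a => (i q.1, x q.2)) univ with hP
  have hPcard : P.card = a * a := by
    rw [hP, Finset.card_image_of_injective]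
    · simp [Fintype.card_fin]
    · intro q q' h
      exact Prod.ext (hi (congrArg Prod.fst h)) (hx (congrArg Prod.snd h))
  set Φ : {B : Fin N → Fin N → Bool // ∀ u s, B (i u) (x s) = ε u} →
      ({p : Fin N × Fin N // p ∉ P} → Bool) :=
    fun B p => B.1 p.1.1 p.1.2 with hΦ
  have hΦinj : Function.Injective Φ := by
    intro B₁ B₂ h
    ext r c
    by_cases hm : (r, c) ∈ P
    · rw [hP, Finset.mem_image] at hm
      obtain ⟨q, -, hq⟩ := hm
      have h1 : i q.1 = r := congrArg Prod.fst hq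
      have h2 : x q.2 = c := congrArg Prod.snd hq
      rw [← h1, ← h2, B₁.2 q.1 q.2, B₂.2 q.1 q.2]
    · exact congrFun h ⟨(r, c), hm⟩
  calc Nat.card {B : Fin N → Fin N → Bool // ∀ u s, B (i u) (x s) = ε u}
      ≤ Nat.card ({p : Fin N × Fin N // p ∉ P} → Bool) :=
        Nat.card_le_card_of_injective Φ hΦinj
    _ = 2 ^ (N*N - a*a) := by
        rw [Nat.card_eq_fintype_card, Fintype.card_fun, Fintype.card_bool]
        congr 1
        rw [Fintype.card_subtype_compl, Fintype.card_prod, Fintype.card_fin,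
          Fintype.card_coe, hPcard]

lemma measure_witness_le (N a : ℕ) (haN : a ≤ N) :
    (PMF.uniformOfFintype (Fin N → Fin N → Bool)).toMeasure {B | Witness N a B}
      ≤ (N:ℝ≥0∞)^a * (N:ℝ≥0∞)^a * 2^a * ((2:ℝ≥0∞)^(a*a))⁻¹ := by
  classical
  set μ := (PMF.uniformOfFintype (Fin N → Fin N → Bool)).toMeasure with hμ
  have hmeas : ∀ s : Set (Fin N → Fin N → Bool), MeasurableSet s :=
    fun s => s.toFinite.measurableSet
  set pat : ((Fin a → Fin N) × (Fin a → Fin N) × (Fin a → Bool)) →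
      Set (Fin N → Fin N → Bool) :=
    fun cfg => {B | ∀ u s, B (cfg.1 u) (cfg.2.1 s) = cfg.2.2 u} with hpat
  set good : Finset ((Fin a → Fin N) × (Fin a → Fin N) × (Fin a → Bool)) :=
    univ.filter (fun cfg => Function.Injective cfg.1 ∧ Function.Injective cfg.2.1)
    with hgood
  have hsub : {B | Witness N a B} ⊆ ⋃ cfg ∈ good, pat cfg := by
    rintro B ⟨i, x, ε, hi, hx, hp⟩
    have hmem : (i, x, ε) ∈ good := by
      rw [hgood, Finset.mem_filter]; exact ⟨mem_univ _, hi, hx⟩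
    exact Set.mem_biUnion hmem (show B ∈ pat (i, x, ε) from hp)
  have hΩcard : (Fintype.card (Fin N → Fin N → Bool)) = 2^(N*N) := by
    simp [Fintype.card_fun, ← pow_mul, mul_comm]
  have hkey : (2:ℝ≥0∞)^(N*N - a*a) / 2^(N*N) = ((2:ℝ≥0∞)^(a*a))⁻¹ := by
    have hsplit : (2:ℝ≥0∞)^(N*N) = 2^(N*N - a*a) * 2^(a*a) := by
      rw [← pow_add]
      congr 1
      have := Nat.mul_le_mul haN haN
      omega
    rw [hsplit, show (2:ℝ≥0∞)^(N*N-a*a) / (2^(N*N-a*a) * 2^(a*a))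
        = 2^(N*N-a*a) * 1 / (2^(N*N-a*a) * 2^(a*a)) by rw [mul_one],
      ENNReal.mul_div_mul_left _ _ (pow_ne_zero _ two_ne_zero)
        (ENNReal.pow_ne_top ENNReal.ofNat_ne_top), one_div]
  have hper : ∀ cfg ∈ good, μ (pat cfg) ≤ ((2:ℝ≥0∞)^(a*a))⁻¹ := by
    intro cfg hcfg
    rw [hgood, Finset.mem_filter] at hcfg
    obtain ⟨-, hi, hx⟩ := hcfg
    rw [hμ, PMF.toMeasure_uniformOfFintype_apply _ (hmeas _)]
    rw [← hkey, hΩcard,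
      show ((2^(N*N) : ℕ) : ℝ≥0∞) = 2^(N*N) by push_cast; ring]
    refine ENNReal.div_le_div_right ?_ _
    simp only [← Nat.card_eq_fintype_card]
    have h2 := card_pat cfg.1 cfg.2.1 cfg.2.2 hi hx
    have h3 : Nat.card (pat cfg)
        = Nat.card {B : Fin N → Fin N → Bool //
            ∀ u s, B (cfg.1 u) (cfg.2.1 s) = cfg.2.2 u} := rfl
    rw [h3]
    calc (Nat.card {B : Fin N → Fin N → Bool //
            ∀ u s, B (cfg.1 u) (cfg.2.1 s) = cfg.2.2 u} : ℝ≥0∞)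
        ≤ ((2 ^ (N*N - a*a) : ℕ) : ℝ≥0∞) := by exact_mod_cast h2
      _ = (2:ℝ≥0∞)^(N*N - a*a) := by push_cast; ring
  calc μ {B | Witness N a B} ≤ μ (⋃ cfg ∈ good, pat cfg) := measure_mono hsub
    _ ≤ ∑ cfg ∈ good, μ (pat cfg) := measure_biUnion_finset_le _ _
    _ ≤ ∑ _cfg ∈ good, ((2:ℝ≥0∞)^(a*a))⁻¹ := Finset.sum_le_sum hper
    _ = good.card * ((2:ℝ≥0∞)^(a*a))⁻¹ := by rw [Finset.sum_const, nsmul_eq_mul]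
    _ ≤ (N:ℝ≥0∞)^a * (N:ℝ≥0∞)^a * 2^a * ((2:ℝ≥0∞)^(a*a))⁻¹ := by
        apply mul_le_mul_left
        have h1 : good.card ≤ Fintype.card
            ((Fin a → Fin N) × (Fin a → Fin N) × (Fin a → Bool)) := by
          rw [← Finset.card_univ]
          exact Finset.card_le_card (Finset.filter_subset _ _)
        have h2 : Fintype.card ((Fin a → Fin N) × (Fin a → Fin N) × (Fin a → Bool))
            = N^a * (N^a * 2^a) := by
          simp [Fintype.card_fun, Fintype.card_fin]
        calc (good.card : ℝ≥0∞)
            ≤ ((Fintype.card ((Fin a → Fin N) × (Fin a → Fin N) × (Fin a → Bool)) : ℕ)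
              : ℝ≥0∞) := by exact_mod_cast h1
          _ = (N:ℝ≥0∞)^a * (N:ℝ≥0∞)^a * 2^a := by rw [h2]; push_cast; ring

lemma exists_chain_of_height {N : ℕ} (A : Fin N → Fin N → ℤ) :
    ∃ c : Fin (matHeight A) → Set (Fin N), StrictMono c ∧ ∀ t, c t ∈ interFamily A := by
  classical
  have hbdd : BddAbove {k | ∃ c : Fin k → Set (Fin N),
      StrictMono c ∧ ∀ t, c t ∈ interFamily A} := by
    refine ⟨Fintype.card (Set (Fin N)), ?_⟩
    rintro k ⟨c, hc, -⟩
    simpa using Fintype.card_le_of_injective c hc.injective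
  have hne : Set.Nonempty {k | ∃ c : Fin k → Set (Fin N),
      StrictMono c ∧ ∀ t, c t ∈ interFamily A} := by
    refine ⟨0, Fin.elim0, ?_, fun t => t.elim0⟩
    intro t; exact t.elim0
  exact Nat.sSup_mem hne hbdd

-- little numeric lemma
lemma four_mul_le_pow : ∀ L : ℕ, 6 ≤ L → 4 * L ≤ 2 ^ (L - 1) := by
  intro L hL
  induction L with
  | zero => omega
  | succ n ih =>
    rcases Nat.lt_or_ge n 6 with h | h
    · interval_cases n <;> simp_all <;> omega
    · have h1 := ih (by omega)
      have h2 : 2 ^ (n - 1) ≤ 2 ^ (n + 1 - 1) := Nat.pow_le_pow_right (by norm_num) (by omega)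
      have h3 : 2 ^ (n+1-1) = 2 * 2^(n-1) := by
        rw [show n + 1 - 1 = (n-1) + 1 by omega, pow_succ]; ring
      omega

lemma clog_tendsto : Tendsto (fun N : ℕ => Nat.clog 2 N) atTop atTop := by
  apply tendsto_atTop_atTop.mpr
  intro M
  refine ⟨2 ^ M, fun N hN => ?_⟩
  calc M = Nat.clog 2 (2 ^ M) := (Nat.clog_pow 2 M (by norm_num)).symm
    _ ≤ Nat.clog 2 N := Nat.clog_mono_right 2 hN

lemma g_tendsto : Tendsto (fun N : ℕ => ((2:ℝ≥0∞) ^ (4 * Nat.clog 2 N))⁻¹) atTop (nhds 0) := by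
  have h4 : Tendsto (fun N : ℕ => 4 * Nat.clog 2 N) atTop atTop :=
    tendsto_atTop_mono (fun N => Nat.le_mul_of_pos_left _ (by norm_num)) clog_tendsto
  have h1 : Tendsto (fun N : ℕ => ((4 * Nat.clog 2 N : ℕ) : ℝ≥0∞)⁻¹) atTop (nhds 0) :=
    ENNReal.tendsto_inv_nat_nhds_zero.comp h4
  refine tendsto_of_tendsto_of_tendsto_of_le_of_le tendsto_const_nhds h1
    (fun N => zero_le) (fun N => ?_)
  refine ENNReal.inv_le_inv.2 ?_
  have := (show 4 * Nat.clog 2 N < 2 ^ (4 * Nat.clog 2 N) from Nat.lt_two_pow_self).le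
  calc ((4 * Nat.clog 2 N : ℕ) : ℝ≥0∞) ≤ ((2 ^ (4 * Nat.clog 2 N) : ℕ) : ℝ≥0∞) := by
        exact_mod_cast this
    _ = (2:ℝ≥0∞) ^ (4 * Nat.clog 2 N) := by push_cast; ring


/-- Random matrices have logarithmic height: there is a constant `C > 0` such
that for a uniformly random total sign matrix `A ∈ {-1,1}^{N×N}` (encoded by
independent uniform Boolean entries, `true ↦ 1`, `false ↦ -1`), the
probability that `h(A) > C·log₂ N` tends to `0` as `N → ∞`. -/
theorem random_matrix_height_log : ∃ C : ℝ, 0 < C ∧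
    Filter.Tendsto (fun N : ℕ =>
      (PMF.uniformOfFintype (Fin N → Fin N → Bool)).toMeasure
        {A | C * Real.logb 2 N <
          (matHeight (fun i j => if A i j then (1 : ℤ) else -1) : ℝ)})
      Filter.atTop (nhds 0) := by
  refine ⟨16, by norm_num, ?_⟩
  refine tendsto_of_tendsto_of_tendsto_of_le_of_le' tendsto_const_nhds g_tendsto
    (Eventually.of_forall fun N => zero_le) ?_
  filter_upwards [eventually_ge_atTop 64] with N hN
  set L := Nat.clog 2 N with hLdef
  have hL6 : 6 ≤ L := by
    calc 6 = Nat.clog 2 (2 ^ 6) := (Nat.clog_pow 2 6 (by norm_num)).symm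
      _ ≤ L := Nat.clog_mono_right 2 (by omega)
  have hpow : 2 ^ (L - 1) < N := Nat.pow_pred_clog_lt_self (by norm_num) (by omega)
  have haN : 4 * L ≤ N := le_trans (four_mul_le_pow L hL6) hpow.le
  set a := 4 * L with hadef
  -- step 1: the event is contained in the witness set
  have hsub : {A : Fin N → Fin N → Bool | 16 * Real.logb 2 N <
      (matHeight (fun i j => if A i j then (1:ℤ) else -1) : ℝ)}
      ⊆ {B | Witness N a B} := by
    intro B hB
    simp only [Set.mem_setOf_eq] at hB
    obtain ⟨c, hc, hm⟩ := exists_chain_of_height (fun i j => if B i j then (1:ℤ) else -1)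
    refine extract B c hc hm (by omega) ?_
    have hlogb1 : (1:ℝ) ≤ Real.logb 2 N := by
      rw [show (1:ℝ) = Real.logb 2 2 from (Real.logb_self_eq_one (by norm_num)).symm]
      exact Real.logb_le_logb_of_le (by norm_num) (by norm_num)
        (by exact_mod_cast (show (2:ℕ) ≤ N by omega))
    have hcast : ((2:ℝ)) ^ (L - 1) ≤ (N:ℝ) := by exact_mod_cast hpow.le
    have hlogL : ((L - 1 : ℕ) : ℝ) ≤ Real.logb 2 N := by
      calc ((L - 1 : ℕ) : ℝ) = Real.logb 2 ((2:ℝ) ^ (L - 1)) := by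
            rw [Real.logb_pow, Real.logb_self_eq_one (by norm_num)]; ring
        _ ≤ Real.logb 2 N := Real.logb_le_logb_of_le (by norm_num)
            (by positivity) hcast
    have hLr : (L : ℝ) ≤ Real.logb 2 N + 1 := by
      have : ((L - 1 : ℕ) : ℝ) = (L : ℝ) - 1 := by
        have : 1 ≤ L := by omega
        push_cast [Nat.cast_sub this]
        ring
      linarith
    have h8 : ((2 * a : ℕ) : ℝ) ≤ 16 * Real.logb 2 N := by
      have : ((2 * a : ℕ) : ℝ) = 8 * (L : ℝ) := by rw [hadef]; push_cast; ring
      rw [this]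
      linarith
    have hlt : ((2 * a : ℕ) : ℝ) < (matHeight
        (fun i j => if B i j then (1:ℤ) else -1) : ℝ) := lt_of_le_of_lt h8 hB
    exact_mod_cast hlt.le
  -- step 2: measure bound
  calc (PMF.uniformOfFintype (Fin N → Fin N → Bool)).toMeasure
        {A | 16 * Real.logb 2 N <
          (matHeight (fun i j => if A i j then (1:ℤ) else -1) : ℝ)}
      ≤ (PMF.uniformOfFintype (Fin N → Fin N → Bool)).toMeasure
        {B | Witness N a B} := measure_mono hsub
    _ ≤ (N:ℝ≥0∞)^a * (N:ℝ≥0∞)^a * 2^a * ((2:ℝ≥0∞)^(a*a))⁻¹ :=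
        measure_witness_le N a haN
    _ ≤ ((2:ℝ≥0∞) ^ (4 * L))⁻¹ := by
        have hN2L : (N:ℝ≥0∞) ≤ 2 ^ L := by
          have := Nat.le_pow_clog (b := 2) (by norm_num) N
          calc (N:ℝ≥0∞) ≤ ((2 ^ L : ℕ) : ℝ≥0∞) := by exact_mod_cast this
            _ = (2:ℝ≥0∞) ^ L := by push_cast; ring
        have hstep1 : (N:ℝ≥0∞)^a * (N:ℝ≥0∞)^a * 2^a
            ≤ (2:ℝ≥0∞)^(L*a + L*a + a) := by
          have heq : ((2:ℝ≥0∞)^L)^a * ((2:ℝ≥0∞)^L)^a * 2^a = 2^(L*a + L*a + a) := by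
            rw [← pow_mul, ← pow_add, ← pow_add]
          rw [← heq]
          exact mul_le_mul' (mul_le_mul' (pow_le_pow_left' hN2L a)
            (pow_le_pow_left' hN2L a)) le_rfl
        have hEle : L*a + L*a + a + 4*L ≤ a*a := by
          have h1 : 1 ≤ L := by omega
          rw [hadef]
          nlinarith
        calc (N:ℝ≥0∞)^a * (N:ℝ≥0∞)^a * 2^a * ((2:ℝ≥0∞)^(a*a))⁻¹
            ≤ (2:ℝ≥0∞)^(L*a + L*a + a) * ((2:ℝ≥0∞)^(a*a))⁻¹ :=
              mul_le_mul_left hstep1 _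
          _ = ((2:ℝ≥0∞)^(a*a - (L*a + L*a + a)))⁻¹ := by
              have hle : L*a + L*a + a ≤ a*a := le_trans (Nat.le_add_right _ _) hEle
              have hsplit : (2:ℝ≥0∞)^(a*a) = 2^(L*a+L*a+a) * 2^(a*a - (L*a+L*a+a)) := by
                rw [← pow_add, Nat.add_sub_cancel' hle]
              rw [hsplit, ENNReal.mul_inv (Or.inl (pow_ne_zero _ two_ne_zero))
                  (Or.inl (ENNReal.pow_ne_top ENNReal.ofNat_ne_top)), ← mul_assoc,
                ENNReal.mul_inv_cancel (pow_ne_zero _ two_ne_zero)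
                  (ENNReal.pow_ne_top ENNReal.ofNat_ne_top), one_mul]
          _ ≤ ((2:ℝ≥0∞) ^ (4 * L))⁻¹ := by
              refine ENNReal.inv_le_inv.2 ?_
              exact pow_le_pow_right₀ one_le_two (by omega)
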